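/- Let Q be a real number with Q > 1/2 + Σ_{i=1}^k q_i, and let (w, w_0) be a fixed strategy of Player W. If no subset I ⊆ {1, …, k} satisfies Σ_{i∈I} q_i = w, then every maximizer (z, z_0, z_1, …, z_k) of Player Z's payoff Π_Z over X_Z satisfies z_0 = 1. (Since every subset sum that is at most w is in fact at most w − 1, setting z_0 = 1 remains feasible and strictly increases the payoff.) -/
import Mathlib


open MeasureTheory

noncomputable section

/-- Player Z's strategy set `X_Z`: tuples `(z, z₀, (z₁,…,z_k))` with
`R ≤ z ≤ R + 2^r − 1`, each `zᵢ ∈ {0,1}`, and `(1/2)·z₀ + Σᵢ qᵢ·zᵢ ≤ z`. -/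
def inXZ (k : ℕ) (q : Fin k → ℕ) (R r : ℕ) (s : ℤ × ℤ × (Fin k → ℤ)) : Prop :=
  (R : ℤ) ≤ s.1 ∧ s.1 ≤ (R : ℤ) + 2 ^ r - 1 ∧
  (s.2.1 = 0 ∨ s.2.1 = 1) ∧ (∀ i, s.2.2 i = 0 ∨ s.2.2 i = 1) ∧
  (1 / 2 : ℝ) * (s.2.1 : ℝ) + ∑ i, (q i : ℝ) * (s.2.2 i : ℝ) ≤ (s.1 : ℝ)

/-- Player W's strategy set `X_W`: pairs `(w, w₀)` with `R ≤ w ≤ R + 2^r − 1`,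
`w` an integer and `w₀` an arbitrary real number. -/
def inXW (R r : ℕ) (t : ℤ × ℝ) : Prop :=
  (R : ℤ) ≤ t.1 ∧ t.1 ≤ (R : ℤ) + 2 ^ r - 1

/-- Player Z's payoff `Π_Z = (1/2)·z₀ + Σᵢ qᵢ·zᵢ + Q·z·(2w − z)`. -/
def payZ (k : ℕ) (q : Fin k → ℕ) (Q : ℝ) (s : ℤ × ℤ × (Fin k → ℤ)) (t : ℤ × ℝ) : ℝ :=
  (1 / 2 : ℝ) * (s.2.1 : ℝ) + ∑ i, (q i : ℝ) * (s.2.2 i : ℝ)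
    + Q * (s.1 : ℝ) * (2 * (t.1 : ℝ) - (s.1 : ℝ))

/-- Player W's payoff `Π_W = (1 − z₀)·w₀`. -/
def payW (k : ℕ) (s : ℤ × ℤ × (Fin k → ℤ)) (t : ℤ × ℝ) : ℝ :=
  (1 - (s.2.1 : ℝ)) * t.2

/-- if no subset of the `qᵢ` sums to `w`, every maximizer of
Player Z's payoff over `X_Z` has `z₀ = 1`. -/
theorem stmt2 (k : ℕ) (q : Fin k → ℕ) (R r : ℕ) (Q : ℝ)
    (hq : ∀ i, 0 < q i) (hR : 0 < R) (hr : 0 < r) (hrk : r ≤ k)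
    (hQ : Q > 1 / 2 + ∑ i, (q i : ℝ))
    (t : ℤ × ℝ) (ht : inXW R r t)
    (hI : ¬ ∃ I : Finset (Fin k), (∑ i ∈ I, (q i : ℤ)) = t.1)
    (s : ℤ × ℤ × (Fin k → ℤ)) (hs : inXZ k q R r s)
    (hmax : ∀ s' : ℤ × ℤ × (Fin k → ℤ), inXZ k q R r s' →
      payZ k q Q s' t ≤ payZ k q Q s t) :
    s.2.1 = 1 := by
  obtain ⟨hz1, hz2, hz0, hzi, hcon⟩ := hs
  obtain ⟨hw1, hw2⟩ := ht
  have hRpos : (1:ℤ) ≤ (R:ℤ) := by exact_mod_cast hR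
  have hwpos : (0:ℝ) ≤ (t.1:ℝ) := by
    have : (0:ℤ) ≤ t.1 := le_trans (by linarith) hw1
    exact_mod_cast this
  -- bounds on the linear part of s's payoff
  have hL0 : (0:ℝ) ≤ (1 / 2 : ℝ) * (s.2.1 : ℝ) + ∑ i, (q i : ℝ) * (s.2.2 i : ℝ) := by
    have h1 : (0:ℝ) ≤ (s.2.1:ℝ) := by rcases hz0 with h | h <;> simp [h]
    have h2 : (0:ℝ) ≤ ∑ i, (q i : ℝ) * (s.2.2 i : ℝ) := by
      apply Finset.sum_nonneg
      intro i _
      rcases hzi i with h | h <;> simp [h]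
    linarith
  have hL1 : (1 / 2 : ℝ) * (s.2.1 : ℝ) + ∑ i, (q i : ℝ) * (s.2.2 i : ℝ)
      ≤ 1 / 2 + ∑ i, (q i : ℝ) := by
    have h1 : (s.2.1:ℝ) ≤ 1 := by rcases hz0 with h | h <;> simp [h]
    have h2 : ∑ i, (q i : ℝ) * (s.2.2 i : ℝ) ≤ ∑ i, (q i : ℝ) := by
      apply Finset.sum_le_sum
      intro i _
      rcases hzi i with h | h <;> simp [h]
    linarith
  have hQpos : (0:ℝ) < Q := by
    have : (0:ℝ) ≤ ∑ i, (q i : ℝ) := Finset.sum_nonneg (fun i _ => by positivity)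
    linarith
  -- Step 1: s.1 = t.1
  have hfeas0 : inXZ k q R r (t.1, 0, fun _ => 0) := by
    refine ⟨hw1, hw2, Or.inl rfl, fun i => Or.inl rfl, ?_⟩
    simpa using hwpos
  have h1 := hmax _ hfeas0
  unfold payZ at h1
  simp only [Int.cast_zero, mul_zero, Finset.sum_const_zero, zero_add, add_zero] at h1
  have hsq : Q * ((t.1:ℝ) - (s.1:ℝ))^2 < Q := by nlinarith
  have hsq2 : ((t.1:ℝ) - (s.1:ℝ))^2 < 1 := by nlinarith
  have hzw : s.1 = t.1 := by
    have h3 : ((t.1 - s.1)^2 : ℤ) < 1 := by exact_mod_cast (by push_cast; linarith : (((t.1 - s.1)^2 : ℤ) : ℝ) < 1)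
    have h4 : (0:ℤ) ≤ (t.1 - s.1)^2 := sq_nonneg _
    have h5 : (t.1 - s.1)^2 = 0 := le_antisymm (by omega) h4
    have := pow_eq_zero_iff (n := 2) (by norm_num) |>.mp h5
    omega
  -- Step 2: rule out s.2.1 = 0
  rcases hz0 with hz0 | hz0
  · exfalso
    set I : Finset (Fin k) := Finset.univ.filter (fun i => s.2.2 i = 1) with hIdef
    have hsum : ∑ i, (q i:ℝ) * (s.2.2 i:ℝ) = ((∑ i ∈ I, (q i:ℤ) : ℤ) : ℝ) := by
      push_cast
      rw [hIdef, Finset.sum_filter]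
      apply Finset.sum_congr rfl
      intro i _
      rcases hzi i with h | h <;> simp [h]
    have hne : (∑ i ∈ I, (q i:ℤ)) ≠ t.1 := fun h => hI ⟨I, h⟩
    have hle : (∑ i ∈ I, (q i:ℤ)) ≤ t.1 := by
      have : ((∑ i ∈ I, (q i:ℤ) : ℤ) : ℝ) ≤ (t.1:ℝ) := by
        rw [← hsum]
        have := hcon
        rw [hz0, hzw] at this
        simpa using this
      exact_mod_cast this
    have hle1 : (∑ i ∈ I, (q i:ℤ)) ≤ t.1 - 1 := by omega
    have hfeas1 : inXZ k q R r (s.1, 1, s.2.2) := by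
      refine ⟨hz1, hz2, Or.inr rfl, hzi, ?_⟩
      simp only
      rw [hsum, hzw]
      have : ((∑ i ∈ I, (q i:ℤ) : ℤ) : ℝ) ≤ (t.1:ℝ) - 1 := by exact_mod_cast hle1
      push_cast
      push_cast at this
      linarith
    have h2 := hmax _ hfeas1
    unfold payZ at h2
    simp only at h2
    rw [hz0] at h2
    linarith
  · exact hz0
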